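/- If x ∈ ℂⁿ is a unit eigenvector of A_μ = √M A √M with eigenvalue λ/N, then y = V x is a unit eigenvector of the model matrix W = D A Dᵀ with eigenvalue λ. -/

import Mathlib

open scoped BigOperators ComplexConjugate
open Matrix

/-- The `N × n` block indicator matrix, over `ℂ`. -/
def blockD (N n : ℕ) (k : Fin n → ℕ) : Matrix (Fin N) (Fin n) ℂ :=
  Matrix.of fun r j =>
    if (∑ i : Fin n, if (i : ℕ) < (j : ℕ) then k i else 0) ≤ (r : ℕ) ∧
        (r : ℕ) < (∑ i : Fin n, if (i : ℕ) < (j : ℕ) then k i else 0) + k j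
    then 1 else 0


lemma blockT_mono (n : ℕ) (k : Fin n → ℕ) :
    Monotone (fun m => ∑ l : Fin n, if (l : ℕ) < m then k l else 0) := by
  intro a b hab
  apply Finset.sum_le_sum
  intro l _
  split_ifs <;> omega

lemma blockT_succ (n : ℕ) (k : Fin n → ℕ) (j : Fin n) :
    (∑ l : Fin n, if (l : ℕ) < (j : ℕ) + 1 then k l else 0)
      = (∑ l : Fin n, if (l : ℕ) < (j : ℕ) then k l else 0) + k j := by
  have h : ∀ l : Fin n, (if (l : ℕ) < (j : ℕ) + 1 then k l else 0)
      = (if (l : ℕ) < (j : ℕ) then k l else 0) + (if l = j then k l else 0) := by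
    intro l
    by_cases h1 : (l : ℕ) < (j : ℕ)
    · have h2 : l ≠ j := fun e => by simp [e] at h1
      simp [h1, h2, Nat.lt_succ_of_lt h1]
    · by_cases h2 : l = j
      · subst h2; simp [h1]
      · have h3 : ¬ ((l : ℕ) < (j : ℕ) + 1) := by
          have := Fin.val_ne_of_ne h2
          omega
        simp [h1, h2, h3]
  simp_rw [h]
  rw [Finset.sum_add_distrib]
  simp

lemma blockD_key (n : ℕ) (k : Fin n → ℕ) (a b : Fin n) (hab : (a : ℕ) < (b : ℕ)) :
    (∑ l : Fin n, if (l : ℕ) < (a : ℕ) then k l else 0) + k a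
      ≤ ∑ l : Fin n, if (l : ℕ) < (b : ℕ) then k l else 0 := by
  rw [← blockT_succ n k a]
  exact blockT_mono n k hab

lemma blockD_bound (N n : ℕ) (k : Fin n → ℕ) (hksum : ∑ i, k i = N) (j : Fin n) :
    (∑ l : Fin n, if (l : ℕ) < (j : ℕ) then k l else 0) + k j ≤ N := by
  rw [← blockT_succ n k j, ← hksum]
  apply Finset.sum_le_sum
  intro l _
  split_ifs <;> simp

lemma blockD_transpose_mul (N n : ℕ) (k : Fin n → ℕ) (hksum : ∑ i, k i = N) :
    (blockD N n k)ᵀ * blockD N n k = Matrix.diagonal (fun i => (k i : ℂ)) := by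
  ext i j
  rw [Matrix.mul_apply]
  simp only [Matrix.transpose_apply, blockD, Matrix.of_apply]
  by_cases hij : i = j
  · subst hij
    rw [Matrix.diagonal_apply_eq]
    set S : ℕ := ∑ l : Fin n, if (l : ℕ) < (i : ℕ) then k l else 0 with hS
    have h1 : ∀ r : Fin N,
        (if S ≤ (r : ℕ) ∧ (r : ℕ) < S + k i then (1:ℂ) else 0) *
        (if S ≤ (r : ℕ) ∧ (r : ℕ) < S + k i then (1:ℂ) else 0)
        = (if S ≤ (r : ℕ) ∧ (r : ℕ) < S + k i then (1:ℂ) else 0) := by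
      intro r; split_ifs <;> simp
    simp_rw [h1]
    rw [Fin.sum_univ_eq_sum_range (fun m => if S ≤ m ∧ m < S + k i then (1:ℂ) else 0) N]
    rw [← Finset.sum_filter]
    have h2 : (Finset.range N).filter (fun m => S ≤ m ∧ m < S + k i)
        = Finset.Ico S (S + k i) := by
      ext m
      simp only [Finset.mem_filter, Finset.mem_range, Finset.mem_Ico]
      have := blockD_bound N n k hksum i
      rw [← hS] at this
      omega
    rw [h2]
    simp [Nat.card_Ico]
  · rw [Matrix.diagonal_apply_ne _ hij]
    apply Finset.sum_eq_zero
    intro r _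
    have hne : (i : ℕ) ≠ (j : ℕ) := Fin.val_ne_of_ne hij
    split_ifs with h1 h2
    · exfalso
      rcases lt_or_gt_of_ne hne with h | h
      · have := blockD_key n k i j h; omega
      · have := blockD_key n k j i h; omega
    all_goals simp

lemma blockD_conjTranspose (N n : ℕ) (k : Fin n → ℕ) :
    (blockD N n k)ᴴ = (blockD N n k)ᵀ := by
  ext a b
  simp only [Matrix.conjTranspose_apply, Matrix.transpose_apply, blockD, Matrix.of_apply]
  split_ifs <;> simp

/-- if `x` is a unit `(λ/N)`-eigenvector of `A_μ = √M A √M`, then `y = V x`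
is a unit `λ`-eigenvector of the model matrix `W = D A Dᵀ`. -/
theorem eigvec_Amu_to_eigvec_W (N n : ℕ) (hN : 0 < N) (hn : 0 < n)
    (μ : Fin n → ℝ) (hμpos : ∀ i, 0 < μ i) (hμsum : ∑ i, μ i = 1)
    (k : Fin n → ℕ) (hkpos : ∀ i, 0 < k i)
    (hk : ∀ i, (k i : ℝ) = μ i * N) (hksum : ∑ i, k i = N)
    (A : Matrix (Fin n) (Fin n) ℝ) (hA : A.IsSymm)
    (W : Matrix (Fin N) (Fin N) ℂ)
    (hW : W = blockD N n k * A.map (Complex.ofReal) * (blockD N n k)ᵀ)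
    (Aμ : Matrix (Fin n) (Fin n) ℂ)
    (hAμ : Aμ = Matrix.diagonal (fun i => (Real.sqrt (μ i) : ℂ)) * A.map (Complex.ofReal) *
        Matrix.diagonal (fun i => (Real.sqrt (μ i) : ℂ)))
    (V : Matrix (Fin N) (Fin n) ℂ)
    (hV : V = ((Real.sqrt N : ℂ))⁻¹ •
        (blockD N n k * Matrix.diagonal fun i => ((Real.sqrt (μ i))⁻¹ : ℂ)))
    (lam : ℝ)
    (x : Fin n → ℂ) (hx_unit : star x ⬝ᵥ x = 1)
    (hx_eig : Aμ.mulVec x = ((lam / N : ℝ) : ℂ) • x) :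
    star (V.mulVec x) ⬝ᵥ (V.mulVec x) = 1 ∧
      W.mulVec (V.mulVec x) = (lam : ℂ) • (V.mulVec x) := by
  have hDtD : (blockD N n k)ᵀ * blockD N n k = Matrix.diagonal (fun i => (k i : ℂ)) :=
    blockD_transpose_mul N n k hksum
  have hDH : (blockD N n k)ᴴ = (blockD N n k)ᵀ := blockD_conjTranspose N n k
  have hNne : (N : ℂ) ≠ 0 := Nat.cast_ne_zero.mpr hN.ne'
  have hsqrtμ : ∀ i, ((Real.sqrt (μ i) : ℂ)) ≠ 0 := fun i => by
    exact_mod_cast Complex.ofReal_ne_zero.mpr (Real.sqrt_pos.mpr (hμpos i)).ne'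
  set D := blockD N n k with hD
  set A' := A.map (Complex.ofReal) with hA'
  set E : Matrix (Fin n) (Fin n) ℂ := Matrix.diagonal fun i => ((Real.sqrt (μ i))⁻¹ : ℂ) with hE
  set F : Matrix (Fin n) (Fin n) ℂ := Matrix.diagonal fun i => ((Real.sqrt (μ i)) : ℂ) with hF
  set c : ℂ := ((Real.sqrt N : ℂ))⁻¹ with hc
  have hcc : c * c = (N : ℂ)⁻¹ := by
    rw [hc, ← mul_inv, ← Complex.ofReal_mul, Real.mul_self_sqrt (Nat.cast_nonneg N)]
    push_cast
    ring
  have hEF : E * F = 1 := by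
    rw [hE, hF, Matrix.diagonal_mul_diagonal]
    have : (fun i => ((Real.sqrt (μ i))⁻¹ : ℂ) * ((Real.sqrt (μ i)) : ℂ)) = fun _ => 1 := by
      funext i
      rw [← Complex.ofReal_inv, ← Complex.ofReal_mul,
        inv_mul_cancel₀ (Real.sqrt_pos.mpr (hμpos i)).ne']
      norm_cast
    rw [this, Matrix.diagonal_one]
  have hki : ∀ i, ((k i : ℂ)) = (Real.sqrt (μ i) : ℂ) * (Real.sqrt (μ i) : ℂ) * N := by
    intro i
    have : (k i : ℝ) = Real.sqrt (μ i) * Real.sqrt (μ i) * N := by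
      rw [Real.mul_self_sqrt (hμpos i).le]; exact hk i
    calc ((k i : ℂ)) = ((k i : ℝ) : ℂ) := by norm_cast
      _ = _ := by rw [this]; push_cast; ring
  have hkE : Matrix.diagonal (fun i => (k i : ℂ)) * E = (N : ℂ) • F := by
    rw [hE, hF, Matrix.diagonal_mul_diagonal, ← Matrix.diagonal_smul]
    apply congrArg Matrix.diagonal
    funext i
    simp only [Pi.smul_apply, smul_eq_mul]
    rw [hki i]
    field_simp [hsqrtμ i]
  have hEH : Eᴴ = E := by
    rw [hE, Matrix.diagonal_conjTranspose]
    apply congrArg Matrix.diagonal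
    funext i
    simp [← Complex.ofReal_inv, Complex.conj_ofReal]
  have hVH : Vᴴ = c • (E * Dᵀ) := by
    rw [hV, Matrix.conjTranspose_smul, Matrix.conjTranspose_mul, hEH, hDH]
    congr 1
    rw [hc, star_inv₀]
    congr 1
    rw [Complex.star_def, Complex.conj_ofReal]
  have hVHV : Vᴴ * V = 1 := by
    rw [hVH, hV, Matrix.smul_mul, Matrix.mul_smul, smul_smul, hcc]
    have : E * Dᵀ * (D * E) = E * Matrix.diagonal (fun i => (k i : ℂ)) * E := by
      rw [Matrix.mul_assoc E Dᵀ _, ← Matrix.mul_assoc Dᵀ D E, hDtD, Matrix.mul_assoc]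
    rw [this, hE, Matrix.diagonal_mul_diagonal, Matrix.diagonal_mul_diagonal,
      ← Matrix.diagonal_smul]
    have : ((N:ℂ)⁻¹ • fun i => (Real.sqrt (μ i) : ℂ)⁻¹ * (k i : ℂ) * (Real.sqrt (μ i) : ℂ)⁻¹)
        = fun _ => (1 : ℂ) := by
      funext i
      simp only [Pi.smul_apply, smul_eq_mul, hki i]
      field_simp
      exact div_self (hsqrtμ i)
    rw [this, Matrix.diagonal_one]
  have hWV : W * V = (N : ℂ) • (V * Aμ) := by
    rw [hW, hV, hAμ]
    rw [Matrix.mul_smul, Matrix.smul_mul, smul_comm ((N:ℂ)) c]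
    congr 1
    have h1 : D * A' * Dᵀ * (D * E) = D * A' * ((N:ℂ) • F) := by
      rw [Matrix.mul_assoc (D * A') Dᵀ (D * E), ← Matrix.mul_assoc Dᵀ D E, hDtD, hkE]
    rw [h1, Matrix.mul_smul]
    congr 1
    simp only [← Matrix.mul_assoc]
    rw [Matrix.mul_assoc D E F, hEF, Matrix.mul_one]
  constructor
  · calc star (V.mulVec x) ⬝ᵥ (V.mulVec x)
        = (star x ᵥ* Vᴴ) ⬝ᵥ (V.mulVec x) := by rw [Matrix.star_mulVec]
      _ = ((star x ᵥ* Vᴴ) ᵥ* V) ⬝ᵥ x := by rw [Matrix.dotProduct_mulVec]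
      _ = (star x ᵥ* (Vᴴ * V)) ⬝ᵥ x := by rw [Matrix.vecMul_vecMul]
      _ = star x ⬝ᵥ x := by rw [hVHV, Matrix.vecMul_one]
      _ = 1 := hx_unit
  · rw [Matrix.mulVec_mulVec, hWV, Matrix.smul_mulVec, ← Matrix.mulVec_mulVec,
      hx_eig, Matrix.mulVec_smul, smul_smul]
    congr 1
    rw [Complex.ofReal_div]
    push_cast
    field_simp
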